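/- Let G be a graph and A, B, C subsets of V(G) with |B| = 2k−1 for some positive integer k. If there is a set of 2k−1 pairwise vertex-disjoint paths each linking A to B, and a set of 2k−1 pairwise vertex-disjoint paths each linking B to C, then G contains k pairwise vertex-disjoint paths each linking A to C. -/

import Mathlib

namespace MengerAux

open SimpleGraph

variable {V : Type} [DecidableEq V]

def Cuts (H : SimpleGraph V) (U A B T : Set V) : Prop :=
  ∀ ⦃a b : V⦄ (w : H.Walk a b), a ∈ A → b ∈ B → (∀ v ∈ w.support, v ∈ U) →
    ∃ t ∈ T, t ∈ w.support

structure WalkSys (H : SimpleGraph V) (U A B : Set V) (k : ℕ) where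
  fst : Fin k → V
  snd : Fin k → V
  walk : ∀ i, H.Walk (fst i) (snd i)
  fst_mem : ∀ i, fst i ∈ A
  snd_mem : ∀ i, snd i ∈ B
  supp : ∀ i, ∀ v ∈ (walk i).support, v ∈ U
  disj : ∀ i j, i ≠ j → ∀ v, v ∈ (walk i).support → v ∉ (walk j).support

def CleanAt {H : SimpleGraph V} (S : Set V) (s : V) {a b : V} (w : H.Walk a b) : Prop :=
  w.support.count s = 1 ∧ ∀ v ∈ w.support, v ∈ S → v = s

lemma exists_clean_prefix {H : SimpleGraph V} {a c : V} (w : H.Walk a c) (S : Set V)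
    (h : ∃ v ∈ w.support, v ∈ S) :
    ∃ s ∈ S, ∃ w' : H.Walk a s, (∀ v ∈ w'.support, v ∈ w.support) ∧ CleanAt S s w' := by
  induction w with
  | nil =>
    obtain ⟨v, hv, hvS⟩ := h
    simp only [Walk.support_nil, List.mem_singleton] at hv
    subst hv
    exact ⟨v, hvS, Walk.nil, by simp, by simp [CleanAt], by simp⟩
  | @cons u x c hadj p ih =>
    by_cases hu : u ∈ S
    · refine ⟨u, hu, Walk.nil, by simp, by simp [CleanAt]⟩
    · have h' : ∃ v ∈ p.support, v ∈ S := by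
        obtain ⟨v, hv, hvS⟩ := h
        rcases List.mem_cons.mp (by simpa using hv) with h | h
        · exact absurd (h ▸ hvS) hu
        · exact ⟨v, h, hvS⟩
      obtain ⟨s, hsS, w', hsub, hclean⟩ := ih h'
      refine ⟨s, hsS, Walk.cons hadj w', ?_, ?_, ?_⟩
      · intro v hv
        rcases (by simpa using hv : v = u ∨ v ∈ w'.support) with h | h
        · simp [h]
        · simp [hsub v h]
      · have hsu : s ≠ u := fun hh => hu (hh ▸ hsS)
        simp [Walk.support_cons, List.count_cons, hclean.1, hsu.symm]
      · intro v hv hvS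
        rcases (by simpa using hv : v = u ∨ v ∈ w'.support) with h | h
        · exact absurd (h ▸ hvS) hu
        · exact hclean.2 v h hvS

lemma cleanAt_end_eq {H : SimpleGraph V} {a s : V} {w : H.Walk a s}
    (h1 : w.support.count s = 1) {v : V} (hv : v ∈ w.support)
    (hs : s ∈ (w.takeUntil v hv).support) : v = s := by
  have hspec := w.take_spec hv
  have hsupp : w.support = (w.takeUntil v hv).support ++ (w.dropUntil v hv).support.tail := by
    conv_lhs => rw [← hspec]
    exact Walk.support_append _ _
  have hcount : ((w.takeUntil v hv).support.count s)
      + ((w.dropUntil v hv).support.tail.count s) = 1 := by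
    rw [← List.count_append, ← hsupp, h1]
  have h2 : 0 < (w.takeUntil v hv).support.count s := List.count_pos_iff.mpr hs
  have h3 : s ∉ (w.dropUntil v hv).support.tail := by
    intro hmem
    have := List.count_pos_iff.mpr hmem
    omega
  have hs' : s ∈ (w.dropUntil v hv).support := (w.dropUntil v hv).end_mem_support
  rw [(w.dropUntil v hv).support_eq_cons] at hs'
  rcases List.mem_cons.mp hs' with h | h
  · exact h.symm ▸ rfl
  · exact absurd h h3

lemma cleanAt_start_eq {H : SimpleGraph V} {s b : V} {w : H.Walk s b}
    (h1 : w.support.count s = 1) {v : V} (hv : v ∈ w.support)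
    (hs : s ∈ (w.dropUntil v hv).support) : v = s := by
  have hspec := w.take_spec hv
  have hsupp : w.support = (w.takeUntil v hv).support ++ (w.dropUntil v hv).support.tail := by
    conv_lhs => rw [← hspec]
    exact Walk.support_append _ _
  have hcount : ((w.takeUntil v hv).support.count s)
      + ((w.dropUntil v hv).support.tail.count s) = 1 := by
    rw [← List.count_append, ← hsupp, h1]
  have h2 : 0 < (w.takeUntil v hv).support.count s :=
    List.count_pos_iff.mpr (w.takeUntil v hv).start_mem_support
  have h3 : s ∉ (w.dropUntil v hv).support.tail := by
    intro hmem
    have := List.count_pos_iff.mpr hmem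
    omega
  rw [(w.dropUntil v hv).support_eq_cons] at hs
  rcases List.mem_cons.mp hs with h | h
  · exact h.symm ▸ rfl
  · exact absurd h h3

lemma exists_clean_suffix {H : SimpleGraph V} {a c : V} (w : H.Walk a c) (S : Set V)
    (h : ∃ v ∈ w.support, v ∈ S) :
    ∃ s ∈ S, ∃ w' : H.Walk s c, (∀ v ∈ w'.support, v ∈ w.support) ∧ CleanAt S s w' := by
  have h' : ∃ v ∈ w.reverse.support, v ∈ S := by
    obtain ⟨v, hv, hvS⟩ := h
    exact ⟨v, by simpa [Walk.support_reverse] using hv, hvS⟩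
  obtain ⟨s, hsS, w'', hsub, hclean⟩ := exists_clean_prefix w.reverse S h'
  refine ⟨s, hsS, w''.reverse, ?_, ?_, ?_⟩
  · intro v hv
    have : v ∈ w''.support := by simpa [Walk.support_reverse] using hv
    have := hsub v this
    simpa [Walk.support_reverse] using this
  · simpa [Walk.support_reverse] using hclean.1
  · intro v hv hvS
    exact hclean.2 v (by simpa [Walk.support_reverse] using hv) hvS

lemma cross_eq {H : SimpleGraph V} {U A B S : Set V} (hcut : Cuts H U A B S)
    {a s t b v : V} (P : H.Walk a s) (Q : H.Walk t b)
    (ha : a ∈ A) (hb : b ∈ B)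
    (hPU : ∀ u ∈ P.support, u ∈ U) (hQU : ∀ u ∈ Q.support, u ∈ U)
    (hPc : CleanAt S s P) (hQc : CleanAt S t Q)
    (hvP : v ∈ P.support) (hvQ : v ∈ Q.support) : s = t := by
  set W : H.Walk a b := (P.takeUntil v hvP).append (Q.dropUntil v hvQ) with hW
  have hWU : ∀ u ∈ W.support, u ∈ U := by
    intro u hu
    rw [hW, Walk.mem_support_append_iff] at hu
    rcases hu with hu | hu
    · exact hPU u (P.support_takeUntil_subset hvP hu)
    · exact hQU u (Q.support_dropUntil_subset hvQ hu)
  obtain ⟨z, hzS, hzW⟩ := hcut W ha hb hWU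
  rw [hW, Walk.mem_support_append_iff] at hzW
  rcases hzW with hz | hz
  · have hzs : z = s := hPc.2 z (P.support_takeUntil_subset hvP hz) hzS
    have hsS' : s ∈ S := hzs ▸ hzS
    have hvs : v = s := cleanAt_end_eq hPc.1 hvP (hzs ▸ hz)
    have hvt : v = t := hQc.2 v hvQ (hvs ▸ hsS')
    rw [← hvs, hvt]
  · have hzt : z = t := hQc.2 z (Q.support_dropUntil_subset hvQ hz) hzS
    have htS' : t ∈ S := hzt ▸ hzS
    have hvt : v = t := cleanAt_start_eq hQc.1 hvQ (hzt ▸ hz)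
    have hvs : v = s := hPc.2 v hvP (hvt ▸ htS')
    rw [← hvs, hvt]

lemma surj_of_inj {κ : ℕ} {f : Fin κ → V} {S : Set V} (hinj : Function.Injective f)
    (hmem : ∀ i, f i ∈ S) (hcard : S.ncard = κ) (hSfin : S.Finite) :
    ∀ x ∈ S, ∃ i, f i = x := by
  have hsub : Set.range f ⊆ S := by rintro _ ⟨i, rfl⟩; exact hmem i
  have hr : (Set.range f).ncard = κ := by
    rw [← Set.image_univ, Set.ncard_image_of_injective _ hinj, Set.ncard_univ]
    simp
  have : Set.range f = S := Set.eq_of_subset_of_ncard_le hsub (by rw [hr, hcard]) hSfin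
  intro x hx
  rw [← this] at hx
  exact hx

/-- Weaken the ambient vertex set. -/
def WalkSys.weaken {H : SimpleGraph V} {U U' A B : Set V} {k : ℕ} (h : U ⊆ U')
    (W : WalkSys H U A B k) : WalkSys H U' A B k :=
  { W with supp := fun i v hv => h (W.supp i v hv) }

/-- Transfer a system to a supergraph. -/
def WalkSys.transferLe {H H' : SimpleGraph V} {U A B : Set V} {k : ℕ}
    (hE : H.edgeSet ⊆ H'.edgeSet) (W : WalkSys H U A B k) : WalkSys H' U A B k where
  fst := W.fst
  snd := W.snd
  walk := fun i => (W.walk i).transfer H' (fun e he => hE ((W.walk i).edges_subset_edgeSet he))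
  fst_mem := W.fst_mem
  snd_mem := W.snd_mem
  supp := fun i v hv => W.supp i v (by simpa using hv)
  disj := fun i j hij v hv hv' =>
    W.disj i j hij v (by simpa using hv) (by simpa using hv')

/-- Take the first `k'` walks of a system. -/
def WalkSys.take {H : SimpleGraph V} {U A B : Set V} {k k' : ℕ} (hk : k' ≤ k)
    (W : WalkSys H U A B k) : WalkSys H U A B k' where
  fst := fun i => W.fst (Fin.castLE hk i)
  snd := fun i => W.snd (Fin.castLE hk i)
  walk := fun i => W.walk (Fin.castLE hk i)
  fst_mem := fun i => W.fst_mem _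
  snd_mem := fun i => W.snd_mem _
  supp := fun i => W.supp _
  disj := fun i j hij => W.disj _ _ (fun h => hij (Fin.castLE_injective hk h))

/-- The empty system. -/
def WalkSys.empty (H : SimpleGraph V) (U A B : Set V) : WalkSys H U A B 0 where
  fst := Fin.elim0
  snd := Fin.elim0
  walk := fun i => i.elim0
  fst_mem := fun i => i.elim0
  snd_mem := fun i => i.elim0
  supp := fun i => i.elim0
  disj := fun i => i.elim0

/-- Prepend the trivial walk at a common vertex `a ∈ A ∩ B` to a system avoiding `a`. -/
lemma WalkSys.consNil {H : SimpleGraph V} {U A B : Set V} {m : ℕ} (a : V)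
    (haA : a ∈ A) (haB : a ∈ B) (haU : a ∈ U)
    (W : WalkSys H (U \ {a}) (A \ {a}) (B \ {a}) m) : Nonempty (WalkSys H U A B (m + 1)) := by
  refine ⟨⟨Fin.cases a W.fst, Fin.cases a W.snd,
    fun i => Fin.cases (motive := fun i => H.Walk (Fin.cases a W.fst i) (Fin.cases a W.snd i))
      ((Walk.nil : H.Walk a a).copy (by simp) (by simp))
      (fun j => (W.walk j).copy (by simp) (by simp)) i, ?_, ?_, ?_, ?_⟩⟩
  · intro i
    induction i using Fin.cases with
    | zero => simpa using haA
    | succ j => simpa using (W.fst_mem j).1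
  · intro i
    induction i using Fin.cases with
    | zero => simpa using haB
    | succ j => simpa using (W.snd_mem j).1
  · intro i
    induction i using Fin.cases with
    | zero =>
      intro v hv
      simp only [Fin.cases_zero, Walk.support_copy, Walk.support_nil,
        List.mem_singleton] at hv
      change v ∈ (Walk.copy (Walk.nil : H.Walk a a) rfl rfl).support at hv
      simp at hv
      exact hv ▸ haU
    | succ j =>
      intro v hv
      simp only [Fin.cases_succ, Walk.support_copy] at hv
      exact (W.supp j v hv).1
  · intro i j hij v hv hv'
    induction i using Fin.cases with
    | zero =>
      simp only [Fin.cases_zero, Walk.support_copy, Walk.support_nil,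
        List.mem_singleton] at hv
      change v ∈ (Walk.copy (Walk.nil : H.Walk a a) rfl rfl).support at hv
      simp at hv
      subst hv
      induction j using Fin.cases with
      | zero => exact hij rfl
      | succ j' =>
        simp only [Fin.cases_succ, Walk.support_copy] at hv'
        exact (W.supp j' v hv').2 rfl
    | succ i' =>
      simp only [Fin.cases_succ, Walk.support_copy] at hv
      induction j using Fin.cases with
      | zero =>
        simp only [Fin.cases_zero, Walk.support_copy, Walk.support_nil,
          List.mem_singleton] at hv'
        change v ∈ (Walk.copy (Walk.nil : H.Walk a a) rfl rfl).support at hv'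
        simp at hv'
        exact (W.supp i' v hv).2 hv'
      | succ j' =>
        simp only [Fin.cases_succ, Walk.support_copy] at hv'
        exact W.disj i' j' (fun h => hij (h ▸ rfl)) v hv hv'

variable [Fintype V]

theorem menger : ∀ (N : ℕ) (H : SimpleGraph V) (U A B : Set V) (k : ℕ),
    U.ncard + H.edgeSet.ncard ≤ N → A ⊆ U → B ⊆ U →
    (∀ T : Set V, T ⊆ U → Cuts H U A B T → k ≤ T.ncard) →
    Nonempty (WalkSys H U A B k) := by
  intro N
  induction N with
  | zero =>
    intro H U A B k hN hA hB hsep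
    have hU : U = ∅ := by
      have : U.ncard = 0 := by omega
      exact (Set.ncard_eq_zero (Set.toFinite U)).mp this
    have hk : k = 0 := by
      have hcut : Cuts H U A B (∅ : Set V) := by
        intro a b w ha hb hw
        exact absurd (hU ▸ hA ha) (Set.notMem_empty a)
      have := hsep ∅ (Set.empty_subset U) hcut
      simpa using this
    subst hk
    exact ⟨WalkSys.empty H U A B⟩
  | succ N ih =>
    intro H U A B k hN hA hB hsep
    rcases Nat.eq_zero_or_pos k with hk0 | hkpos
    · subst hk0; exact ⟨WalkSys.empty H U A B⟩
    -- Step 1: if A and B meet, peel off a trivial walk.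
    by_cases hAB : (A ∩ B).Nonempty
    · obtain ⟨a, haA, haB⟩ := hAB
      obtain ⟨m, rfl⟩ : ∃ m, k = m + 1 := ⟨k - 1, by omega⟩
      have hmeas : (U \ {a}).ncard + H.edgeSet.ncard ≤ N := by
        have := Set.ncard_diff_singleton_lt_of_mem (hA haA) (Set.toFinite U)
        omega
      have hsep' : ∀ T : Set V, T ⊆ U \ {a} → Cuts H (U \ {a}) (A \ {a}) (B \ {a}) T →
          m ≤ T.ncard := by
        intro T hTU hTcut
        have hcut : Cuts H U A B (T ∪ {a}) := by
          intro x y w hx hy hw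
          by_cases haw : a ∈ w.support
          · exact ⟨a, Or.inr rfl, haw⟩
          · obtain ⟨t, htT, htw⟩ := hTcut w ⟨hx, fun h => haw (h ▸ w.start_mem_support)⟩
              ⟨hy, fun h => haw (h ▸ w.end_mem_support)⟩
              (fun v hv => ⟨hw v hv, fun h => haw (h ▸ hv)⟩)
            exact ⟨t, Or.inl htT, htw⟩
        have h1 : m + 1 ≤ (T ∪ {a}).ncard :=
          hsep _ (Set.union_subset (hTU.trans Set.diff_subset) (by simpa using hA haA)) hcut
        have h2 : (T ∪ {a}).ncard ≤ T.ncard + 1 := by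
          simpa using Set.ncard_union_le T {a}
        omega
      obtain ⟨W⟩ := ih H (U \ {a}) (A \ {a}) (B \ {a}) m hmeas
        (fun x hx => ⟨hA hx.1, hx.2⟩) (fun x hx => ⟨hB hx.1, hx.2⟩) hsep'
      exact WalkSys.consNil a haA haB (hA haA) W
    -- Now A ∩ B = ∅.
    have hABempty : A ∩ B = ∅ := Set.not_nonempty_iff_eq_empty.mp hAB
    -- The minimum size κ of a cut.
    have hUcut : Cuts H U A B U := fun a b w ha hb hw => ⟨a, hA ha, w.start_mem_support⟩
    set cutSizes : Set ℕ := {n | ∃ S : Set V, S ⊆ U ∧ Cuts H U A B S ∧ S.ncard = n} with hcs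
    have hne : cutSizes.Nonempty := ⟨U.ncard, U, Set.Subset.rfl, hUcut, rfl⟩
    set κ := sInf cutSizes with hκ
    obtain ⟨S₀, hS₀U, hS₀cut, hS₀card⟩ : κ ∈ cutSizes := Nat.sInf_mem hne
    have hκk : k ≤ κ := hS₀card ▸ hsep S₀ hS₀U hS₀cut
    have hκ_le : ∀ T : Set V, T ⊆ U → Cuts H U A B T → κ ≤ T.ncard :=
      fun T hT hc => Nat.sInf_le ⟨T, hT, hc, rfl⟩
    by_cases hS : ∃ S : Set V, S ⊆ U ∧ Cuts H U A B S ∧ S.ncard = κ ∧ S ≠ A ∧ S ≠ B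
    · -- CASE 1
      obtain ⟨S, hSU, hScut, hScard, hSA, hSB⟩ := hS
      set sideA : Set V := {v | ∃ x ∈ A, ∃ w : H.Walk x v, (∀ u ∈ w.support, u ∈ U) ∧
        (∀ u ∈ w.support, u ∈ S → u = v)} with hsideA
      set sideB : Set V := {v | ∃ y ∈ B, ∃ w : H.Walk v y, (∀ u ∈ w.support, u ∈ U) ∧
        (∀ u ∈ w.support, u ∈ S → u = v)} with hsideB
      set UA : Set V := sideA ∪ S with hUAdef
      set UB : Set V := sideB ∪ S with hUBdef
      have hsideAU : sideA ⊆ U := by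
        rintro v ⟨x, hx, w, hwU, hclean⟩; exact hwU v w.end_mem_support
      have hsideBU : sideB ⊆ U := by
        rintro v ⟨y, hy, w, hwU, hclean⟩; exact hwU v w.start_mem_support
      have hUAU : UA ⊆ U := Set.union_subset hsideAU hSU
      have hUBU : UB ⊆ U := Set.union_subset hsideBU hSU
      have hAUA : A ⊆ sideA := by
        intro x hx
        refine ⟨x, hx, Walk.nil, ?_, ?_⟩ <;> intro u hu <;>
          simp only [Walk.support_nil, List.mem_singleton] at hu
        · exact hu ▸ hA hx
        · intro _; exact hu
      have hBUB : B ⊆ sideB := by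
        intro y hy
        refine ⟨y, hy, Walk.nil, ?_, ?_⟩ <;> intro u hu <;>
          simp only [Walk.support_nil, List.mem_singleton] at hu
        · exact hu ▸ hB hy
        · intro _; exact hu
      -- a vertex of B outside S and a vertex of A outside S
      have hBS : ∃ b₁ ∈ B, b₁ ∉ S := by
        by_contra hcon; push_neg at hcon
        have h1 : κ ≤ B.ncard :=
          hκ_le B hB (fun x y w hx hy hw => ⟨y, hy, w.end_mem_support⟩)
        exact hSB ((Set.eq_of_subset_of_ncard_le hcon (by omega) (Set.toFinite S)).symm)
      have hAS : ∃ a₁ ∈ A, a₁ ∉ S := by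
        by_contra hcon; push_neg at hcon
        have h1 : κ ≤ A.ncard :=
          hκ_le A hA (fun x y w hx hy hw => ⟨x, hx, w.start_mem_support⟩)
        exact hSA ((Set.eq_of_subset_of_ncard_le hcon (by omega) (Set.toFinite S)).symm)
      obtain ⟨b₁, hb₁B, hb₁S⟩ := hBS
      obtain ⟨a₁, ha₁A, ha₁S⟩ := hAS
      have hb₁UA : b₁ ∉ UA := by
        rintro (⟨x, hx, w, hwU, hclean⟩ | hmem)
        · obtain ⟨t, htS, htw⟩ := hScut w hx hb₁B hwU
          exact hb₁S (hclean t htw htS ▸ htS)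
        · exact hb₁S hmem
      have ha₁UB : a₁ ∉ UB := by
        rintro (⟨y, hy, w, hwU, hclean⟩ | hmem)
        · obtain ⟨t, htS, htw⟩ := hScut w ha₁A hy hwU
          exact ha₁S (hclean t htw htS ▸ htS)
        · exact ha₁S hmem
      have hUAlt : UA.ncard < U.ncard :=
        Set.ncard_lt_ncard (Set.ssubset_iff_subset_ne.mpr
          ⟨hUAU, fun h => hb₁UA (h.symm ▸ hB hb₁B)⟩) (Set.toFinite U)
      have hUBlt : UB.ncard < U.ncard :=
        Set.ncard_lt_ncard (Set.ssubset_iff_subset_ne.mpr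
          ⟨hUBU, fun h => ha₁UB (h.symm ▸ hA ha₁A)⟩) (Set.toFinite U)
      -- cut conditions for the two halves
      have hleft : ∀ T : Set V, T ⊆ UA → Cuts H UA A S T → κ ≤ T.ncard := by
        intro T hTUA hTcut
        refine hκ_le T (hTUA.trans hUAU) ?_
        intro x y w hx hy hwU
        obtain ⟨z, hzS, hzw⟩ := hScut w hx hy hwU
        obtain ⟨s, hsS, w', hsub, hclean⟩ := exists_clean_prefix w S ⟨z, hzw, hzS⟩
        have hw'UA : ∀ u ∈ w'.support, u ∈ UA := by
          intro u hu
          left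
          refine ⟨x, hx, w'.takeUntil u hu,
            fun z' hz' => hwU z' (hsub z' (w'.support_takeUntil_subset hu hz')), ?_⟩
          intro z' hz' hz'S
          have hz's : z' = s := hclean.2 z' (w'.support_takeUntil_subset hu hz') hz'S
          exact hz's.trans (cleanAt_end_eq hclean.1 hu (hz's ▸ hz')).symm
        obtain ⟨t, htT, htw⟩ := hTcut w' hx hsS hw'UA
        exact ⟨t, htT, hsub t htw⟩
      have hright : ∀ T : Set V, T ⊆ UB → Cuts H UB S B T → κ ≤ T.ncard := by
        intro T hTUB hTcut
        refine hκ_le T (hTUB.trans hUBU) ?_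
        intro x y w hx hy hwU
        obtain ⟨z, hzS, hzw⟩ := hScut w hx hy hwU
        obtain ⟨s, hsS, w', hsub, hclean⟩ := exists_clean_suffix w S ⟨z, hzw, hzS⟩
        have hw'UB : ∀ u ∈ w'.support, u ∈ UB := by
          intro u hu
          left
          refine ⟨y, hy, w'.dropUntil u hu,
            fun z' hz' => hwU z' (hsub z' (w'.support_dropUntil_subset hu hz')), ?_⟩
          intro z' hz' hz'S
          have hz's : z' = s := hclean.2 z' (w'.support_dropUntil_subset hu hz') hz'S
          exact hz's.trans (cleanAt_start_eq hclean.1 hu (hz's ▸ hz')).symm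
        obtain ⟨t, htT, htw⟩ := hTcut w' hsS hy hw'UB
        exact ⟨t, htT, hsub t htw⟩
      have hmeasA : UA.ncard + H.edgeSet.ncard ≤ N := by omega
      have hmeasB : UB.ncard + H.edgeSet.ncard ≤ N := by omega
      obtain ⟨L⟩ := ih H UA A S κ hmeasA (fun x hx => Or.inl (hAUA hx))
        Set.subset_union_right hleft
      obtain ⟨R⟩ := ih H UB S B κ hmeasB Set.subset_union_right
        (fun y hy => Or.inl (hBUB hy)) hright
      -- clean the two systems
      have hLex : ∀ i, ∃ s ∈ S, ∃ w' : H.Walk (L.fst i) s,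
          (∀ v ∈ w'.support, v ∈ (L.walk i).support) ∧ CleanAt S s w' :=
        fun i => exists_clean_prefix (L.walk i) S
          ⟨L.snd i, (L.walk i).end_mem_support, L.snd_mem i⟩
      choose σ hσS P hPsub hPclean using hLex
      have hRex : ∀ i, ∃ t ∈ S, ∃ w' : H.Walk t (R.snd i),
          (∀ v ∈ w'.support, v ∈ (R.walk i).support) ∧ CleanAt S t w' :=
        fun i => exists_clean_suffix (R.walk i) S
          ⟨R.fst i, (R.walk i).start_mem_support, R.fst_mem i⟩
      choose τ hτS Q hQsub hQclean using hRex
      have hPU : ∀ i, ∀ v ∈ (P i).support, v ∈ U :=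
        fun i v hv => hUAU (L.supp i v (hPsub i v hv))
      have hQU : ∀ i, ∀ v ∈ (Q i).support, v ∈ U :=
        fun i v hv => hUBU (R.supp i v (hQsub i v hv))
      have hσinj : Function.Injective σ := by
        intro i j hij
        by_contra hne
        refine L.disj i j hne (σ i) (hPsub i _ (P i).end_mem_support) (hPsub j _ ?_)
        rw [hij]; exact (P j).end_mem_support
      have hτinj : Function.Injective τ := by
        intro i j hij
        by_contra hne
        refine R.disj i j hne (τ i) (hQsub i _ (Q i).start_mem_support) (hQsub j _ ?_)
        rw [hij]; exact (Q j).start_mem_support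
      have hpair : ∀ i, ∃ j, τ j = σ i :=
        fun i => surj_of_inj hτinj hτS hScard (Set.toFinite S) (σ i) (hσS i)
      choose π hπ using hpair
      have hcross : ∀ i j v, v ∈ (P i).support → v ∈ (Q j).support → σ i = τ j :=
        fun i j v hvP hvQ => cross_eq hScut (P i) (Q j) (L.fst_mem i) (R.snd_mem j)
          (hPU i) (hQU j) (hPclean i) (hQclean j) hvP hvQ
      refine ⟨WalkSys.take hκk ⟨L.fst, fun i => R.snd (π i),
        fun i => (P i).append ((Q (π i)).copy (hπ i) rfl),
        L.fst_mem, fun i => R.snd_mem (π i), ?_, ?_⟩⟩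
      · intro i v hv
        rw [Walk.mem_support_append_iff] at hv
        rcases hv with hv | hv
        · exact hPU i v hv
        · rw [Walk.support_copy] at hv
          exact hQU (π i) v hv
      · intro i j hij v hv hv'
        rw [Walk.mem_support_append_iff] at hv hv'
        have hne2 : σ i ≠ σ j := fun h => hij (hσinj h)
        rcases hv with hv | hv <;> rcases hv' with hv' | hv'
        · exact L.disj i j hij v (hPsub i v hv) (hPsub j v hv')
        · rw [Walk.support_copy] at hv'
          exact hne2 ((hcross i (π j) v hv hv').trans (hπ j))
        · rw [Walk.support_copy] at hv
          exact hne2 ((hcross j (π i) v hv' hv).trans (hπ i)).symm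
        · rw [Walk.support_copy] at hv hv'
          have hππ : π i ≠ π j := by
            intro h
            apply hne2
            rw [← hπ i, ← hπ j, h]
          exact R.disj (π i) (π j) hππ v (hQsub _ v hv) (hQsub _ v hv')

    · -- CASE 2
      push_neg at hS
      have hmin : ∀ S : Set V, S ⊆ U → Cuts H U A B S → S.ncard = κ → S = A ∨ S = B := by
        intro S h1 h2 h3
        by_contra hcon
        push_neg at hcon
        exact hcon.2 (hS S h1 h2 h3 hcon.1)
      -- There is some A–B walk in U, else ∅ is a cut and k = 0.
      have hexW : ∃ x y : V, ∃ w : H.Walk x y, x ∈ A ∧ y ∈ B ∧ ∀ v ∈ w.support, v ∈ U := by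
        by_contra hno
        push_neg at hno
        have hcut : Cuts H U A B (∅ : Set V) := by
          intro x y w hx hy hw
          obtain ⟨v, hv, hvU⟩ := hno x y w hx hy
          exact absurd (hw v hv) hvU
        have := hsep ∅ (Set.empty_subset U) hcut
        simp at this
        omega
      -- minimal length of an A–B walk in U
      set Lens : Set ℕ := {n | ∃ x y : V, ∃ w : H.Walk x y,
        x ∈ A ∧ y ∈ B ∧ (∀ v ∈ w.support, v ∈ U) ∧ w.length = n} with hLens
      have hLne : Lens.Nonempty := by
        obtain ⟨x, y, w, hx, hy, hw⟩ := hexW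
        exact ⟨w.length, x, y, w, hx, hy, hw, rfl⟩
      obtain ⟨a₀, b₀, w₀, ha₀, hb₀, hw₀U, hw₀len⟩ : sInf Lens ∈ Lens := Nat.sInf_mem hLne
      have hminlen : ∀ (x y : V) (w : H.Walk x y), x ∈ A → y ∈ B →
          (∀ v ∈ w.support, v ∈ U) → sInf Lens ≤ w.length :=
        fun x y w hx hy hw => Nat.sInf_le ⟨x, y, w, hx, hy, hw, rfl⟩
      cases w₀ with
      | nil =>
        exact absurd (Set.mem_inter ha₀ hb₀) (hABempty ▸ Set.notMem_empty a₀)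
      | @cons _ c _ h₁ rest =>
      cases rest with
      | nil =>
        -- minimal walk is a single edge a₀ – b₀
        set e : Sym2 V := s(a₀, b₀) with he
        have heE : e ∈ H.edgeSet := h₁
        by_cases hrec : ∀ T : Set V, T ⊆ U → Cuts (H.deleteEdges {e}) U A B T → k ≤ T.ncard
        · have hmeas : U.ncard + (H.deleteEdges {e}).edgeSet.ncard ≤ N := by
            have h1 : (H.deleteEdges {e}).edgeSet = H.edgeSet \ {e} := edgeSet_deleteEdges {e}
            have h2 : (H.edgeSet \ {e}).ncard < H.edgeSet.ncard :=
              Set.ncard_diff_singleton_lt_of_mem heE (Set.toFinite _)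
            rw [h1]; omega
          obtain ⟨W⟩ := ih (H.deleteEdges {e}) U A B k hmeas hA hB hrec
          exact ⟨W.transferLe (by rw [edgeSet_deleteEdges]; exact Set.diff_subset)⟩
        · push_neg at hrec
          obtain ⟨T, hTU, hTcut, hTk⟩ := hrec
          -- T ∪ {a₀} and T ∪ {b₀} are cuts of H
          have hcutgen : ∀ z : V, z ∈ e → Cuts H U A B (T ∪ {z}) := by
            intro z hz
            intro x y w hx hy hw
            by_cases hzw : z ∈ w.support
            · exact ⟨z, Or.inr rfl, hzw⟩
            · have hew : e ∉ w.edges := by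
                intro hmem
                rcases Sym2.mem_iff.mp hz with rfl | rfl
                · exact hzw (w.fst_mem_support_of_mem_edges (he ▸ hmem))
                · exact hzw (w.snd_mem_support_of_mem_edges (he ▸ hmem))
              obtain ⟨t, htT, htw⟩ := hTcut (w.toDeleteEdges {e}
                (fun e' he' h => hew (by simpa using h ▸ he'))) hx hy
                (by simpa using hw)
              exact ⟨t, Or.inl htT, by simpa using htw⟩
            
          have hcA : Cuts H U A B (T ∪ {a₀}) := hcutgen a₀ (by simp [he])
          have hcB : Cuts H U A B (T ∪ {b₀}) := hcutgen b₀ (by simp [he])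
          have hsubA : (T ∪ {a₀}) ⊆ U := Set.union_subset hTU (by simpa using hA ha₀)
          have hsubB : (T ∪ {b₀}) ⊆ U := Set.union_subset hTU (by simpa using hB hb₀)
          have hcard1 : κ ≤ (T ∪ {a₀}).ncard := hκ_le _ hsubA hcA
          have hcard2 : (T ∪ {a₀}).ncard ≤ T.ncard + 1 := by
            simpa using Set.ncard_union_le T {a₀}
          have hcard1' : κ ≤ (T ∪ {b₀}).ncard := hκ_le _ hsubB hcB
          have hcard2' : (T ∪ {b₀}).ncard ≤ T.ncard + 1 := by
            simpa using Set.ncard_union_le T {b₀}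
          have hκeq : κ = k := by omega
          have hcAeq : T ∪ {a₀} = A ∨ T ∪ {a₀} = B := hmin _ hsubA hcA (by omega)
          have hcBeq : T ∪ {b₀} = A ∨ T ∪ {b₀} = B := hmin _ hsubB hcB (by omega)
          have ha₀B : a₀ ∉ B := fun h =>
            (hABempty ▸ Set.notMem_empty a₀) (Set.mem_inter ha₀ h)
          have hb₀A : b₀ ∉ A := fun h =>
            (hABempty ▸ Set.notMem_empty b₀) (Set.mem_inter h hb₀)
          have hTA : T ∪ {a₀} = A := by
            rcases hcAeq with h | h
            · exact h
            · exact absurd (h ▸ Set.mem_union_right T rfl) ha₀B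
          have hTB : T ∪ {b₀} = B := by
            rcases hcBeq with h | h
            · exact absurd (h ▸ Set.mem_union_right T rfl) hb₀A
            · exact h
          have hTempty : T = ∅ := by
            have h1 : T ⊆ A := hTA ▸ Set.subset_union_left
            have h2 : T ⊆ B := hTB ▸ Set.subset_union_left
            have : T ⊆ A ∩ B := Set.subset_inter h1 h2
            rw [hABempty] at this
            exact Set.subset_empty_iff.mp this
          have hAa : A = {a₀} := by rw [← hTA, hTempty]; simp
          have hBb : B = {b₀} := by rw [← hTB, hTempty]; simp
          have hk1 : k = 1 := by
            have h3 := hκ_le A hA (fun x y w hx hy hw => ⟨x, hx, w.start_mem_support⟩)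
            have h4 : A.ncard = 1 := by rw [hAa]; simp
            omega
          subst hk1
          refine ⟨⟨fun _ => a₀, fun _ => b₀, fun _ => Walk.cons h₁ Walk.nil,
            fun _ => ha₀, fun _ => hb₀, fun i v hv => ?_, fun i j hij => absurd (Subsingleton.elim i j) hij⟩⟩
          exact hw₀U v hv
      | @cons _ d _ h₂ rest2 =>
        -- middle vertex c, walk length ≥ 2
        have hcU : c ∈ U := hw₀U c (by simp)
        have hcA : c ∉ A := by
          intro hcA
          have := hminlen c b₀ (Walk.cons h₂ rest2) hcA hb₀
            (fun v hv => hw₀U v (by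
              simp only [Walk.support_cons, List.mem_cons] at hv ⊢
              tauto))
          simp [Walk.length_cons] at this hw₀len
          omega
        have hcB : c ∉ B := by
          intro hcB
          have := hminlen a₀ c (Walk.cons h₁ Walk.nil) ha₀ hcB
            (fun v hv => by
              simp only [Walk.support_cons, Walk.support_nil, List.mem_cons,
                List.mem_singleton, List.not_mem_nil, or_false] at hv
              rcases hv with rfl | rfl
              · exact hA ha₀
              · exact hcU)
          simp [Walk.length_cons] at this hw₀len
          omega
        by_cases hrec : ∀ T : Set V, T ⊆ U \ {c} → Cuts H (U \ {c}) A B T → k ≤ T.ncard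
        · have hmeas : (U \ {c}).ncard + H.edgeSet.ncard ≤ N := by
            have := Set.ncard_diff_singleton_lt_of_mem hcU (Set.toFinite U)
            omega
          obtain ⟨W⟩ := ih H (U \ {c}) A B k hmeas
            (fun x hx => ⟨hA hx, fun h => hcA (h ▸ hx)⟩)
            (fun x hx => ⟨hB hx, fun h => hcB (h ▸ hx)⟩) hrec
          exact ⟨W.weaken Set.diff_subset⟩
        · push_neg at hrec
          obtain ⟨T, hTU, hTcut, hTk⟩ := hrec
          have hcut : Cuts H U A B (T ∪ {c}) := by
            intro x y w hx hy hw
            by_cases hcw : c ∈ w.support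
            · exact ⟨c, Or.inr rfl, hcw⟩
            · obtain ⟨t, htT, htw⟩ := hTcut w hx hy
                (fun v hv => ⟨hw v hv, fun h => hcw (h ▸ hv)⟩)
              exact ⟨t, Or.inl htT, htw⟩
          have hsub : (T ∪ {c}) ⊆ U :=
            Set.union_subset (hTU.trans Set.diff_subset) (by simpa using hcU)
          have h1 : κ ≤ (T ∪ {c}).ncard := hκ_le _ hsub hcut
          have h2 : (T ∪ {c}).ncard ≤ T.ncard + 1 := by
            simpa using Set.ncard_union_le T {c}
          have heq : T ∪ {c} = A ∨ T ∪ {c} = B := hmin _ hsub hcut (by omega)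
          rcases heq with h | h
          · exact absurd (h ▸ Set.mem_union_right T rfl) hcA
          · exact absurd (h ▸ Set.mem_union_right T rfl) hcB

end MengerAux

/-- A path in a simple graph `G`, bundled with its endpoints. -/
structure PathIn (V : Type) (G : SimpleGraph V) where
  a : V
  b : V
  walk : G.Walk a b
  isPath : walk.IsPath

/-- If `|B| = 2k-1`, there are `2k-1` pairwise vertex-disjoint `A`–`B` paths
and `2k-1` pairwise vertex-disjoint `B`–`C` paths, then there are `k` pairwise vertex-disjoint
`A`–`C` paths. -/
theorem stmt_0 {V : Type} [Fintype V] (G : SimpleGraph V) (A B C : Set V)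
    (k : ℕ) (hk : 0 < k) (hB : B.ncard = 2 * k - 1)
    (P Q : Fin (2 * k - 1) → PathIn V G)
    (hP : ∀ i, (P i).a ∈ A ∧ (P i).b ∈ B)
    (hPdisj : ∀ i j, i ≠ j → ∀ v, v ∈ (P i).walk.support → v ∉ (P j).walk.support)
    (hQ : ∀ i, (Q i).a ∈ B ∧ (Q i).b ∈ C)
    (hQdisj : ∀ i j, i ≠ j → ∀ v, v ∈ (Q i).walk.support → v ∉ (Q j).walk.support) :
    ∃ R : Fin k → PathIn V G,
      (∀ i, (R i).a ∈ A ∧ (R i).b ∈ C) ∧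
      (∀ i j, i ≠ j → ∀ v, v ∈ (R i).walk.support → v ∉ (R j).walk.support) := by
  classical
  open MengerAux in
  set U : Set V := {v | (∃ i, v ∈ (P i).walk.support) ∨ (∃ i, v ∈ (Q i).walk.support)} with hU
  set A' : Set V := Set.range (fun i => (P i).a) with hA'
  set C' : Set V := Set.range (fun i => (Q i).b) with hC'
  have hA'U : A' ⊆ U := by
    rintro _ ⟨i, rfl⟩
    exact Or.inl ⟨i, (P i).walk.start_mem_support⟩
  have hC'U : C' ⊆ U := by
    rintro _ ⟨i, rfl⟩
    exact Or.inr ⟨i, (Q i).walk.end_mem_support⟩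
  have hβinj : Function.Injective (fun i => (P i).b) := by
    intro i j hij
    by_contra hne
    exact hPdisj i j hne (P i).b (P i).walk.end_mem_support
      (by have hij' : (P i).b = (P j).b := hij
          rw [hij']; exact (P j).walk.end_mem_support)
  have hγinj : Function.Injective (fun i => (Q i).a) := by
    intro i j hij
    by_contra hne
    exact hQdisj i j hne (Q i).a (Q i).walk.start_mem_support
      (by have hij' : (Q i).a = (Q j).a := hij
          rw [hij']; exact (Q j).walk.start_mem_support)
  have hβsurj := MengerAux.surj_of_inj hβinj (fun i => (hP i).2) hB (Set.toFinite B)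
  have hγsurj := MengerAux.surj_of_inj hγinj (fun i => (hQ i).1) hB (Set.toFinite B)
  have hsep : ∀ T : Set V, T ⊆ U → MengerAux.Cuts G U A' C' T → k ≤ T.ncard := by
    intro T hTU hTcut
    by_contra hlt
    push_neg at hlt
    set IP : Set (Fin (2 * k - 1)) := {i | ∃ v ∈ T, v ∈ (P i).walk.support} with hIP
    set IQ : Set (Fin (2 * k - 1)) := {i | ∃ v ∈ T, v ∈ (Q i).walk.support} with hIQ
    have hIPcard : IP.ncard ≤ T.ncard := by
      set φ : Fin (2 * k - 1) → V := fun i =>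
        if h : i ∈ IP then h.choose else (P i).b with hφ
      refine Set.ncard_le_ncard_of_injOn φ ?_ ?_ (Set.toFinite T)
      · intro i hi
        simp only [hφ, dif_pos hi]
        exact hi.choose_spec.1
      · intro i hi j hj hij
        simp only [hφ, dif_pos hi, dif_pos hj] at hij
        by_contra hne
        exact hPdisj i j hne _ hi.choose_spec.2 (hij ▸ hj.choose_spec.2)
    have hIQcard : IQ.ncard ≤ T.ncard := by
      set φ : Fin (2 * k - 1) → V := fun i =>
        if h : i ∈ IQ then h.choose else (Q i).b with hφ
      refine Set.ncard_le_ncard_of_injOn φ ?_ ?_ (Set.toFinite T)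
      · intro i hi
        simp only [hφ, dif_pos hi]
        exact hi.choose_spec.1
      · intro i hi j hj hij
        simp only [hφ, dif_pos hi, dif_pos hj] at hij
        by_contra hne
        exact hQdisj i j hne _ hi.choose_spec.2 (hij ▸ hj.choose_spec.2)
    set Bim : Set V := ((fun i => (P i).b) '' IP) ∪ ((fun i => (Q i).a) '' IQ) with hBim
    have hBimcard : Bim.ncard ≤ 2 * k - 2 := by
      have h1 : ((fun i => (P i).b) '' IP).ncard ≤ IP.ncard :=
        Set.ncard_image_le (Set.toFinite IP)
      have h2 : ((fun i => (Q i).a) '' IQ).ncard ≤ IQ.ncard :=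
        Set.ncard_image_le (Set.toFinite IQ)
      have h3 : Bim.ncard ≤ ((fun i => (P i).b) '' IP).ncard + ((fun i => (Q i).a) '' IQ).ncard :=
        Set.ncard_union_le _ _
      omega
    have hbex : ∃ b ∈ B, b ∉ Bim := by
      by_contra hcon; push_neg at hcon
      have := Set.ncard_le_ncard hcon (Set.toFinite Bim)
      omega
    obtain ⟨b, hbB, hbBim⟩ := hbex
    obtain ⟨i₀, hi₀⟩ := hβsurj b hbB
    obtain ⟨j₀, hj₀⟩ := hγsurj b hbB
    have hi₀IP : i₀ ∉ IP := fun h => hbBim (Or.inl ⟨i₀, h, hi₀⟩)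
    have hj₀IQ : j₀ ∉ IQ := fun h => hbBim (Or.inr ⟨j₀, h, hj₀⟩)
    set W : G.Walk (P i₀).a (Q j₀).b :=
      (P i₀).walk.append ((Q j₀).walk.copy (hj₀.trans hi₀.symm) rfl) with hW
    have hWU : ∀ v ∈ W.support, v ∈ U := by
      intro v hv
      rw [hW, SimpleGraph.Walk.mem_support_append_iff] at hv
      rcases hv with hv | hv
      · exact Or.inl ⟨i₀, hv⟩
      · rw [SimpleGraph.Walk.support_copy] at hv
        exact Or.inr ⟨j₀, hv⟩
    obtain ⟨t, htT, htW⟩ := hTcut W ⟨i₀, rfl⟩ ⟨j₀, rfl⟩ hWU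
    rw [hW, SimpleGraph.Walk.mem_support_append_iff] at htW
    rcases htW with htW | htW
    · exact hi₀IP ⟨t, htT, htW⟩
    · rw [SimpleGraph.Walk.support_copy] at htW
      exact hj₀IQ ⟨t, htT, htW⟩
  obtain ⟨W⟩ := MengerAux.menger (U.ncard + G.edgeSet.ncard) G U A' C' k le_rfl hA'U hC'U hsep
  refine ⟨fun i => ⟨W.fst i, W.snd i, (W.walk i).bypass, (W.walk i).bypass_isPath⟩, ?_, ?_⟩
  · intro i
    constructor
    · obtain ⟨j, hj⟩ := W.fst_mem i
      show W.fst i ∈ A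
      rw [← hj]
      exact (hP j).1
    · obtain ⟨j, hj⟩ := W.snd_mem i
      show W.snd i ∈ C
      rw [← hj]
      exact (hQ j).2
  · intro i j hij v hv hv'
    exact W.disj i j hij v ((W.walk i).support_bypass_subset hv)
      ((W.walk j).support_bypass_subset hv')
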